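/- Let $A$ and $B$ be finite abelian $p$-groups, with homomorphisms $N : B \to A$ and $\iota : A \to B$ such that $N$ is surjective, every element of $A \setminus pA$ has order greater than $p$, the $p$-ranks of $A$ and $B$ are both equal to $r$, $|B|/|A| = p^r$, and $N(\iota(a)) = pa$ for all $a \in A$. Then $\iota(A) \subseteq pB$. -/

import Mathlib

/-- The multiplication-by-`p` homomorphism on an additive commutative group;
its range is the subgroup `pA`. -/
def pMulHom (p : ℕ) (A : Type*) [AddCommGroup A] : A →+ A where
  toFun a := p • a
  map_zero' := by simp
  map_add' a b := by simp [smul_add]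

/-- under the hypotheses of Lemma `ab` (N surjective, subexponent of A
greater than p, equal p-ranks r, |B|/|A| = p^r, N∘ι = p), one has `ι(A) ⊆ pB`. -/
theorem stmt1 (p r : ℕ) (hp : p.Prime)
    (A B : Type*) [AddCommGroup A] [AddCommGroup B] [Finite A] [Finite B]
    (hApgrp : ∃ n, Nat.card A = p ^ n) (hBpgrp : ∃ n, Nat.card B = p ^ n)
    (N : B →+ A) (ι : A →+ B)
    (hNsurj : Function.Surjective N)
    (hsexp : ∀ a : A, a ∉ (pMulHom p A).range → p < addOrderOf a)
    (hrkA : Nat.card (A ⧸ (pMulHom p A).range) = p ^ r)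
    (hrkB : Nat.card (B ⧸ (pMulHom p B).range) = p ^ r)
    (hcard : Nat.card B = Nat.card A * p ^ r)
    (hNι : ∀ a : A, N (ι a) = p • a) :
    ι.range ≤ (pMulHom p B).range := by
  -- induced map on quotients
  have hmap : (pMulHom p B).range ≤ ((pMulHom p A).range.comap N) := by
    rintro b ⟨x, rfl⟩
    exact ⟨N x, (N.map_nsmul p x).symm⟩
  let f : B ⧸ (pMulHom p B).range →+ A ⧸ (pMulHom p A).range :=
    QuotientAddGroup.map _ _ N hmap
  have hfsurj : Function.Surjective f := by
    intro a
    obtain ⟨a', rfl⟩ := QuotientAddGroup.mk'_surjective _ a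
    obtain ⟨b, rfl⟩ := hNsurj a'
    exact ⟨QuotientAddGroup.mk' _ b, rfl⟩
  have hfbij : Function.Bijective f :=
    (Nat.bijective_iff_surjective_and_card f).mpr ⟨hfsurj, by rw [hrkB, hrkA]⟩
  rintro b ⟨a, rfl⟩
  have h0 : f (QuotientAddGroup.mk' _ (ι a)) = f 0 := by
    show QuotientAddGroup.mk' _ (N (ι a)) = f 0
    rw [hNι a, map_zero]
    exact (QuotientAddGroup.eq_zero_iff _).mpr ⟨a, rfl⟩
  have : QuotientAddGroup.mk' (pMulHom p B).range (ι a) = 0 := hfbij.1 h0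
  exact (QuotientAddGroup.eq_zero_iff _).mp this
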